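/- arXiv:2212.03622 — 5 statements merged into one kernel-verified Lean document; each statement's English description precedes it below -/
import Mathlib

section
/- For a connected graph G with n vertices and m edges, the spectral radius (largest eigenvalue of the adjacency matrix) satisfies ρ(G) ≤ √(2m − n + 1). -/
open scoped Classical

/-- The adjacency matrix of a simple graph is Hermitian over `ℝ`. -/
theorem adjMatrix_isHermitian {n : ℕ} (G : SimpleGraph (Fin n)) :
    (G.adjMatrix ℝ).IsHermitian := by
  unfold Matrix.IsHermitian
  rw [Matrix.conjTranspose_eq_transpose_of_trivial]
  exact G.isSymm_adjMatrix

/-- The spectral radius of a graph: the largest eigenvalue of its adjacency matrix. -/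
noncomputable def specRad {n : ℕ} (G : SimpleGraph (Fin n)) : ℝ :=
  ⨆ i, (adjMatrix_isHermitian G).eigenvalues i

open Finset Matrix in
/-- Hong's key combinatorial bound: for a connected graph, the sum of the degrees of the
neighbors of any vertex is at most `2m - (n - 1)`. -/
lemma hong_neighbor_degree_sum {n : ℕ} (G : SimpleGraph (Fin n)) (hG : G.Connected)
    (u : Fin n) :
    (∑ v ∈ G.neighborFinset u, G.degree v) + (n - 1) ≤ 2 * G.edgeFinset.card := by
  have hdeg : ∀ v : Fin n, 1 < n → 0 < G.degree v := by
    intro v hn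
    rw [SimpleGraph.degree_pos_iff_exists_adj]
    obtain ⟨w, hw⟩ := Fintype.exists_ne_of_one_lt_card (by simpa : 1 < Fintype.card (Fin n)) v
    obtain ⟨p⟩ := hG.preconnected v w
    exact ⟨_, p.adj_snd (SimpleGraph.Walk.not_nil_of_ne (Ne.symm hw))⟩
  have hsplit : ∑ v ∈ G.neighborFinset u, G.degree v
      + ∑ v ∈ (G.neighborFinset u)ᶜ, G.degree v = 2 * G.edgeFinset.card := by
    rw [Finset.sum_add_sum_compl, SimpleGraph.sum_degrees_eq_twice_card_edges]
  have hu : u ∈ (G.neighborFinset u)ᶜ := by simp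
  rcases Nat.lt_or_ge 1 n with hn | hn
  · have h2 : (n - 1 : ℕ) ≤ ∑ v ∈ (G.neighborFinset u)ᶜ, G.degree v := by
      have h3 : ∑ v ∈ (G.neighborFinset u)ᶜ, G.degree v
          = G.degree u + ∑ v ∈ ((G.neighborFinset u)ᶜ).erase u, G.degree v :=
        (Finset.add_sum_erase _ _ hu).symm
      have h4 : (((G.neighborFinset u)ᶜ).erase u).card
          ≤ ∑ v ∈ ((G.neighborFinset u)ᶜ).erase u, G.degree v :=
        Finset.card_nsmul_le_sum _ _ 1 (fun v _ => hdeg v hn) |>.trans_eq' (by simp)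
      have hcard : (((G.neighborFinset u)ᶜ).erase u).card = n - 1 - G.degree u := by
        rw [Finset.card_erase_of_mem hu, Finset.card_compl]
        simp [SimpleGraph.card_neighborFinset_eq_degree, Nat.sub_right_comm]
      have hdle : G.degree u ≤ n - 1 := by
        have := G.degree_lt_card_verts u
        simp only [Fintype.card_fin] at this
        omega
      omega
    omega
  · interval_cases n
    · exact u.elim0
    · have : G.neighborFinset u = ∅ := by
        ext v; simp only [SimpleGraph.mem_neighborFinset, Finset.notMem_empty, iff_false]
        intro h; exact G.ne_of_adj h (Subsingleton.elim u v)
      simp [this]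

open Finset Matrix in
theorem stmt0 {n : ℕ} (G : SimpleGraph (Fin n)) (hG : G.Connected) :
    specRad G ≤ Real.sqrt (2 * G.edgeSet.ncard - n + 1) := by
  have key := hong_neighbor_degree_sum G hG
  have hne : Nonempty (Fin n) := hG.nonempty
  have hn1 : 1 ≤ n := Nat.one_le_iff_ne_zero.mpr (by rintro rfl; exact hne.elim (·.elim0))
  set A := G.adjMatrix ℝ with hAdef
  have hA := adjMatrix_isHermitian G
  obtain ⟨i₀, hi₀⟩ := exists_eq_ciSup_of_finite (f := hA.eigenvalues)
  set ρ := hA.eigenvalues i₀ with hρdef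
  have hspec : specRad G = ρ := hi₀.symm
  set x : Fin n → ℝ := fun v => hA.eigenvectorBasis i₀ v with hxdef
  have hAx : A *ᵥ x = ρ • x := hA.mulVec_eigenvectorBasis i₀
  have hnorm : ∑ v, (x v) ^ 2 = 1 := by
    have h1 : ‖hA.eigenvectorBasis i₀‖ = 1 := hA.eigenvectorBasis.orthonormal.1 i₀
    have h2 := EuclideanSpace.norm_eq (hA.eigenvectorBasis i₀)
    rw [h1] at h2
    have h3 := Real.sqrt_eq_one.mp h2.symm
    simpa [Real.norm_eq_abs, sq_abs] using h3
  set C : ℝ := 2 * G.edgeSet.ncard - n + 1 with hCdef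
  have hCncard : (G.edgeSet.ncard : ℝ) = (G.edgeFinset.card : ℝ) := by
    rw [Set.ncard_eq_toFinset_card']
    congr 2
  have hS : ∀ u : Fin n, (∑ v, A u v * G.degree v) ≤ C := by
    intro u
    have h1 : ∑ v, A u v * (G.degree v : ℝ) = ∑ v ∈ G.neighborFinset u, (G.degree v : ℝ) := by
      simp [hAdef, SimpleGraph.neighborFinset_eq_filter, Finset.sum_ite, ite_mul]
    rw [h1, hCdef, hCncard]
    have h2 := key u
    have h3 : ((∑ v ∈ G.neighborFinset u, G.degree v : ℕ) : ℝ) + ((n - 1 : ℕ) : ℝ)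
        ≤ 2 * (G.edgeFinset.card : ℝ) := by exact_mod_cast h2
    rw [Nat.cast_sub hn1] at h3
    push_cast at h3 ⊢
    linarith
  have hrow : ∀ v : Fin n, ∑ u, A v u = (G.degree v : ℝ) := by
    intro v
    simp [hAdef, SimpleGraph.degree, SimpleGraph.neighborFinset_eq_filter, Finset.sum_ite]
  have hA2 : ∀ v u : Fin n, A v u ^ 2 = A v u := by
    intro v u
    simp only [hAdef, SimpleGraph.adjMatrix_apply]
    split_ifs <;> norm_num
  have hsymm : ∀ v u : Fin n, A v u = A u v := by
    intro v u
    simp [hAdef, SimpleGraph.adjMatrix_apply, SimpleGraph.adj_comm]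
  have hsq : ρ ^ 2 ≤ C := by
    have e1 : ρ ^ 2 = ∑ v, ((A *ᵥ x) v) ^ 2 := by
      rw [hAx]
      simp only [Pi.smul_apply, smul_eq_mul, mul_pow, ← Finset.mul_sum, hnorm, mul_one]
    have e2 : ∀ v, ((A *ᵥ x) v) ^ 2 ≤ (G.degree v : ℝ) * ∑ u, A v u * (x u) ^ 2 := by
      intro v
      have hmv : (A *ᵥ x) v = ∑ u, A v u * x u := by
        simp [Matrix.mulVec, dotProduct]
      have hstep : ∀ u, A v u * x u = A v u * (A v u * x u) := by
        intro u
        rw [← mul_assoc, ← sq, hA2]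
      have hcs := Finset.sum_mul_sq_le_sq_mul_sq Finset.univ
        (fun u => A v u) (fun u => A v u * x u)
      calc ((A *ᵥ x) v) ^ 2 = (∑ u, A v u * (A v u * x u)) ^ 2 := by
              rw [hmv]; congr 1; exact Finset.sum_congr rfl fun u _ => hstep u
        _ ≤ (∑ u, A v u ^ 2) * ∑ u, (A v u * x u) ^ 2 := hcs
        _ = (G.degree v : ℝ) * ∑ u, A v u * (x u) ^ 2 := by
              congr 1
              · rw [← hrow v]; exact Finset.sum_congr rfl fun u _ => hA2 v u
              · exact Finset.sum_congr rfl fun u _ => by rw [mul_pow, hA2]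
    calc ρ ^ 2 = ∑ v, ((A *ᵥ x) v) ^ 2 := e1
      _ ≤ ∑ v, (G.degree v : ℝ) * ∑ u, A v u * (x u) ^ 2 :=
          Finset.sum_le_sum fun v _ => e2 v
      _ = ∑ u, (x u) ^ 2 * ∑ v, A u v * (G.degree v : ℝ) := by
          simp_rw [Finset.mul_sum]
          rw [Finset.sum_comm]
          exact Finset.sum_congr rfl fun u _ => Finset.sum_congr rfl fun v _ => by
            rw [hsymm v u]; ring
      _ ≤ ∑ u, (x u) ^ 2 * C :=
          Finset.sum_le_sum fun u _ => mul_le_mul_of_nonneg_left (hS u) (sq_nonneg _)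
      _ = C := by rw [← Finset.sum_mul, hnorm, one_mul]
  rw [hspec]
  exact Real.le_sqrt_of_sq_le hsq
end

section
/- Let a, b, n be positive integers with b ≥ a and n ≥ 3b(b+1)/a + 3b + 7. Then the spectral radius of the join K_{⌈(2b²+2b)/a⌉+2b−4} ∇ (K₂ ∪ K_{n−⌈(2b²+2b)/a⌉−2b+2}) is strictly less than n − 2. -/
open scoped Classical

/-- The graph `K_c ∇ (K₂ ∪ K_{n-c-2})` on `Fin n`: the first `c` vertices form a
dominating clique, the next two vertices form a `K₂`, and the remaining vertices
form a clique `K_{n-c-2}`. -/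
def joinGraph (n c : ℕ) : SimpleGraph (Fin n) where
  Adj u v := u ≠ v ∧ ((u : ℕ) < c ∨ (v : ℕ) < c ∨ (((u : ℕ) < c + 2) ↔ ((v : ℕ) < c + 2)))
  symm := ⟨by
    rintro u v ⟨h1, h2⟩
    exact ⟨h1.symm, by tauto⟩⟩
  loopless := ⟨fun u h => h.1 rfl⟩

/-- The graph `H_{n,b} = K_{b-1} ∇ (K₁ ∪ K_{n-b})` on `Fin n`: the complete graph on the
vertices `1, …, n-1` together with the vertex `0` joined precisely to `1, …, b-1`. -/
def Hgraph (n b : ℕ) : SimpleGraph (Fin n) where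
  Adj u v := u ≠ v ∧ ¬((u : ℕ) = 0 ∧ b ≤ (v : ℕ)) ∧ ¬((v : ℕ) = 0 ∧ b ≤ (u : ℕ))
  symm := ⟨by
    rintro u v ⟨h1, h2, h3⟩
    exact ⟨h1.symm, h3, h2⟩⟩
  loopless := ⟨fun u h => h.1 rfl⟩

section Aux
open Finset Matrix

lemma posdef3 (α β γ r p q : ℝ) (hα : 0 < α) (hγ : 0 < γ)
    (h2 : 1 < α*β) (h3 : β + γ < α*β*γ) (hne : ¬(r = 0 ∧ p = 0 ∧ q = 0)) :
    0 < α*r^2 + β*p^2 + γ*q^2 - 2*r*p - 2*r*q := by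
  have key : α*(α*β-1)*(α*r^2 + β*p^2 + γ*q^2 - 2*r*p - 2*r*q)
      = (α*β-1)*(α*r-p-q)^2 + ((α*β-1)*p - q)^2 + α*(α*β*γ-β-γ)*q^2 := by ring
  have h2' : 0 < α*β - 1 := by linarith
  have h3' : 0 < α*(α*β*γ-β-γ) := mul_pos hα (by linarith)
  have hprod : 0 < α*(α*β-1) := mul_pos hα h2'
  have main : 0 < α*(α*β-1)*(α*r^2 + β*p^2 + γ*q^2 - 2*r*p - 2*r*q) := by
    rw [key]
    rcases eq_or_ne q 0 with hq | hq
    · rcases eq_or_ne p 0 with hp | hp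
      · have hr : r ≠ 0 := by tauto
        have : 0 < (α*r-p-q)^2 := by
          subst hq hp; simp only [sub_zero]; positivity
        nlinarith [sq_nonneg ((α*β-1)*p - q), sq_nonneg q]
      · have : 0 < ((α*β-1)*p - q)^2 := by
          subst hq; simp only [sub_zero]; positivity
        nlinarith [sq_nonneg (α*r-p-q), sq_nonneg q]
    · have : 0 < q^2 := by positivity
      nlinarith [sq_nonneg (α*r-p-q), sq_nonneg ((α*β-1)*p - q)]
  nlinarith [main, hprod]

lemma quad_sum (n c : ℕ) (x : Fin n → ℝ) :
    x ⬝ᵥ ((joinGraph n c).adjMatrix ℝ *ᵥ x)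
      = (∑ u, x u) * (∑ u, x u) - (∑ u, x u ^ 2)
        - 2 * ((∑ u : Fin n, (if c ≤ (u:ℕ) ∧ (u:ℕ) < c+2 then (1:ℝ) else 0) * x u)
              * (∑ u : Fin n, (if c+2 ≤ (u:ℕ) then (1:ℝ) else 0) * x u)) := by
  classical
  set P : Fin n → ℝ := fun u => if c ≤ (u:ℕ) ∧ (u:ℕ) < c+2 then (1:ℝ) else 0 with hP
  set B : Fin n → ℝ := fun u => if c+2 ≤ (u:ℕ) then (1:ℝ) else 0 with hB
  have pointwise : ∀ u w : Fin n, ((joinGraph n c).adjMatrix ℝ) u w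
      = 1 - (if u = w then 1 else 0) - (P u * B w + B u * P w) := by
    intro u w
    simp only [SimpleGraph.adjMatrix_apply, joinGraph, ne_eq, Fin.ext_iff, hP, hB]
    split_ifs <;> norm_num <;> omega
  calc x ⬝ᵥ ((joinGraph n c).adjMatrix ℝ *ᵥ x)
      = ∑ u, ∑ w, (x u * x w - (if u = w then x u * x w else 0)
          - ((P u * x u) * (B w * x w) + (B u * x u) * (P w * x w))) := by
        simp only [dotProduct, Matrix.mulVec, dotProduct]
        refine Finset.sum_congr rfl fun u _ => ?_
        rw [Finset.mul_sum]
        refine Finset.sum_congr rfl fun w _ => ?_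
        rw [pointwise u w]
        by_cases h : u = w <;> simp [h] <;> ring
    _ = _ := by
        simp only [Finset.sum_sub_distrib, Finset.sum_add_distrib, ← Finset.sum_mul_sum,
          Finset.sum_ite_eq, Finset.mem_univ, if_true]
        ring_nf
        simp only [hP, hB]; ring_nf


lemma indsum (n : ℕ) (pr : ℕ → Prop) [DecidablePred pr] (s : Finset ℕ)
    (hs : (Finset.range n).filter pr = s) :
    ∑ u : Fin n, (if pr (u:ℕ) then (1:ℝ) else 0) = s.card := by
  rw [Fin.sum_univ_eq_sum_range (fun i => if pr i then (1:ℝ) else 0), ← Finset.sum_filter, hs,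
    Finset.sum_const, nsmul_eq_mul, mul_one]

set_option maxHeartbeats 800000 in
lemma quad (n c : ℕ) (hc2 : 2 ≤ c) (hcn : c + 10 ≤ n)
    (key : 2*(c:ℝ)*((c:ℝ)+1) < ((n:ℝ)-1)*((n:ℝ)-3))
    (x : Fin n → ℝ) (hx : x ≠ 0) :
    x ⬝ᵥ ((joinGraph n c).adjMatrix ℝ *ᵥ x) < ((n:ℝ)-2) * ∑ u, x u ^ 2 := by
  classical
  -- indicators
  set Cf : Fin n → ℝ := fun u => if ((u:ℕ) < c) then (1:ℝ) else 0 with hCf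
  set P : Fin n → ℝ := fun u => if (c ≤ (u:ℕ) ∧ (u:ℕ) < c+2) then (1:ℝ) else 0 with hPf
  set B : Fin n → ℝ := fun u => if (c+2 ≤ (u:ℕ)) then (1:ℝ) else 0 with hBf
  set r := ∑ u : Fin n, Cf u * x u with hr
  set p := ∑ u : Fin n, P u * x u with hp
  set q := ∑ u : Fin n, B u * x u with hq
  set tC := ∑ u : Fin n, Cf u * x u ^ 2 with htC
  set tP := ∑ u : Fin n, P u * x u ^ 2 with htP
  set tB := ∑ u : Fin n, B u * x u ^ 2 with htB
  set t2 := ∑ u : Fin n, x u ^ 2 with ht2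
  have hcnR : (c:ℝ) + 10 ≤ (n:ℝ) := by exact_mod_cast Nat.cast_le.mpr hcn
  have hc2R : (2:ℝ) ≤ (c:ℝ) := by exact_mod_cast hc2
  have hcpos : (0:ℝ) < c := by linarith
  have hmpos : (0:ℝ) < (n:ℝ) - c - 2 := by linarith
  -- partition of unity
  have hone : ∀ u : Fin n, Cf u + P u + B u = 1 := by
    intro u; simp only [hCf, hPf, hBf]; split_ifs <;> norm_num <;> omega
  have hSsum : ∑ u : Fin n, x u = r + p + q := by
    rw [hr, hp, hq, ← Finset.sum_add_distrib, ← Finset.sum_add_distrib]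
    refine Finset.sum_congr rfl fun u _ => ?_
    linear_combination (-(x u)) * hone u
  have ht2sum : t2 = tC + tP + tB := by
    rw [ht2, htC, htP, htB, ← Finset.sum_add_distrib, ← Finset.sum_add_distrib]
    refine Finset.sum_congr rfl fun u _ => ?_
    linear_combination (-(x u ^ 2)) * hone u
  -- indicator sums (cards)
  have hCcard : ∑ u : Fin n, Cf u = (c:ℝ) := by
    rw [hCf]
    rw [indsum n (fun i => i < c) (Finset.range c) (by ext i; simp; omega)]
    simp
  have hPcard : ∑ u : Fin n, P u = (2:ℝ) := by
    rw [hPf]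
    rw [indsum n (fun i => c ≤ i ∧ i < c+2) (Finset.Ico c (c+2)) (by ext i; simp; omega)]
    simp
  have hBcard : ∑ u : Fin n, B u = (n:ℝ) - c - 2 := by
    rw [hBf]
    rw [indsum n (fun i => c+2 ≤ i) (Finset.Ico (c+2) n) (by ext i; simp; omega)]
    rw [Nat.card_Ico]
    push_cast [Nat.cast_sub (by omega : c + 2 ≤ n)]
    ring
  -- idempotency facts and Cauchy-Schwarz per block
  have hCS : ∀ (f : Fin n → ℝ), (∀ u, f u = 0 ∨ f u = 1) →
      (∑ u : Fin n, f u * x u)^2 ≤ (∑ u : Fin n, f u) * (∑ u : Fin n, f u * x u ^ 2) := by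
    intro f hf
    have h1 : ∀ u, f u * x u = f u * (f u * x u) := by
      intro u; rcases hf u with h | h <;> rw [h] <;> ring
    have h2 : ∀ u, f u ^ 2 = f u := by
      intro u; rcases hf u with h | h <;> rw [h] <;> ring
    have h3 : ∀ u, (f u * x u)^2 = f u * x u ^ 2 := by
      intro u; rcases hf u with h | h <;> rw [h] <;> ring
    calc (∑ u : Fin n, f u * x u)^2 = (∑ u : Fin n, f u * (f u * x u))^2 := by
          rw [Finset.sum_congr rfl fun u _ => h1 u]
      _ ≤ (∑ u : Fin n, f u ^ 2) * (∑ u : Fin n, (f u * x u)^2) :=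
          Finset.sum_mul_sq_le_sq_mul_sq _ _ _
      _ = (∑ u : Fin n, f u) * (∑ u : Fin n, f u * x u ^ 2) := by
          rw [Finset.sum_congr rfl fun u _ => h2 u, Finset.sum_congr rfl fun u _ => h3 u]
  have ind01 : ∀ (pr : Prop) [Decidable pr], (if pr then (1:ℝ) else 0) = 0 ∨ (if pr then (1:ℝ) else 0) = 1 := by
    intro pr _; split_ifs <;> simp
  have hCSC : r^2 ≤ (c:ℝ) * tC := by
    have := hCS Cf (fun u => by rw [hCf]; exact ind01 _)
    rwa [hCcard] at this
  have hCSP : p^2 ≤ 2 * tP := by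
    have := hCS P (fun u => by rw [hPf]; exact ind01 _)
    rwa [hPcard] at this
  have hCSB : q^2 ≤ ((n:ℝ) - c - 2) * tB := by
    have := hCS B (fun u => by rw [hBf]; exact ind01 _)
    rwa [hBcard] at this
  -- nonnegativity
  have htCnn : 0 ≤ tC := Finset.sum_nonneg fun u _ => by
    rcases ind01 ((u:ℕ) < c) with h | h <;> rw [hCf] <;> simp only <;> rw [h] <;> positivity
  have htPnn : 0 ≤ tP := Finset.sum_nonneg fun u _ => by
    rcases ind01 (c ≤ (u:ℕ) ∧ (u:ℕ) < c+2) with h | h <;> rw [hPf] <;> simp only <;> rw [h] <;> positivity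
  have htBnn : 0 ≤ tB := Finset.sum_nonneg fun u _ => by
    rcases ind01 (c+2 ≤ (u:ℕ)) with h | h <;> rw [hBf] <;> simp only <;> rw [h] <;> positivity
  have ht2pos : 0 < t2 := by
    obtain ⟨u, hu⟩ := Function.ne_iff.mp hx
    have h1 : x u ^ 2 ≤ t2 := Finset.single_le_sum (fun i _ => sq_nonneg (x i)) (Finset.mem_univ u)
    have : 0 < x u ^ 2 := sq_pos_of_ne_zero hu
    linarith

  -- fold the sums from quad_sum
  have hpeq : (∑ u : Fin n, (if c ≤ (u:ℕ) ∧ (u:ℕ) < c+2 then (1:ℝ) else 0) * x u) = p := rfl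
  have hqeq : (∑ u : Fin n, (if c+2 ≤ (u:ℕ) then (1:ℝ) else 0) * x u) = q := rfl
  clear_value Cf P B r p q tC tP tB t2
  have hQ : x ⬝ᵥ ((joinGraph n c).adjMatrix ℝ *ᵥ x)
      = (r+p+q)*(r+p+q) - t2 - 2*(p*q) := by
    rw [quad_sum n c x, hpeq, hqeq, hSsum, ← ht2]
  have hsq : (r+p+q)^2 = (r+p+q)*(r+p+q) := sq (r+p+q)
  suffices hgoal : 0 < ((n:ℝ)-1)*t2 - (r+p+q)^2 + 2*(p*q) by
    rw [hQ]; linarith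
  clear hQ hsq hx hone hCf hPf hBf hpeq hqeq hCS ind01 hSsum hCcard hPcard hBcard hr hp hq htC htP htB ht2
  clear x Cf P B
  by_cases h0 : r = 0 ∧ p = 0 ∧ q = 0
  · obtain ⟨h1, h2, h3⟩ := h0
    rw [h1, h2, h3]
    have : 0 < ((n:ℝ)-1) := by linarith
    nlinarith [mul_pos this ht2pos]
  · have hαpos : 0 < ((n:ℝ)-1-(c:ℝ))/(c:ℝ) := div_pos (by linarith) hcpos
    have hγpos : 0 < ((c:ℝ)+1)/((n:ℝ)-(c:ℝ)-2) := div_pos (by linarith) hmpos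
    have h2' : 1 < (((n:ℝ)-1-(c:ℝ))/(c:ℝ)) * (((n:ℝ)-3)/2) := by
      rw [div_mul_div_comm, lt_div_iff₀ (by positivity)]
      nlinarith [mul_nonneg (show (0:ℝ) ≤ (n:ℝ)-(c:ℝ)-10 by linarith)
        (show (0:ℝ) ≤ (n:ℝ)-3 by linarith)]
    have h3' : ((n:ℝ)-3)/2 + ((c:ℝ)+1)/((n:ℝ)-(c:ℝ)-2)
        < (((n:ℝ)-1-(c:ℝ))/(c:ℝ)) * (((n:ℝ)-3)/2) * (((c:ℝ)+1)/((n:ℝ)-(c:ℝ)-2)) := by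
      rw [div_add_div _ _ (two_ne_zero) hmpos.ne', div_mul_div_comm, div_mul_div_comm,
        div_lt_div_iff₀ (by positivity) (by positivity)]
      nlinarith [mul_pos hmpos (sub_pos.mpr key)]
    have hposf := posdef3 (((n:ℝ)-1-(c:ℝ))/(c:ℝ)) (((n:ℝ)-3)/2) (((c:ℝ)+1)/((n:ℝ)-(c:ℝ)-2))
      r p q hαpos hγpos h2' h3' h0
    have hb1 : (((n:ℝ)-1-(c:ℝ))/(c:ℝ) + 1) * r^2 ≤ ((n:ℝ)-1) * tC := by
      have e : ((n:ℝ)-1-(c:ℝ))/(c:ℝ) + 1 = ((n:ℝ)-1)/(c:ℝ) := by field_simp; ring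
      rw [e, div_mul_eq_mul_div, div_le_iff₀ hcpos]
      nlinarith [mul_le_mul_of_nonneg_left hCSC (show (0:ℝ) ≤ (n:ℝ)-1 by linarith)]
    have hb2 : (((n:ℝ)-3)/2 + 1) * p^2 ≤ ((n:ℝ)-1) * tP := by
      have e : ((n:ℝ)-3)/2 + 1 = ((n:ℝ)-1)/2 := by ring
      rw [e, div_mul_eq_mul_div, div_le_iff₀ (by norm_num : (0:ℝ) < 2)]
      nlinarith [mul_le_mul_of_nonneg_left hCSP (show (0:ℝ) ≤ (n:ℝ)-1 by linarith)]
    have hb3 : (((c:ℝ)+1)/((n:ℝ)-(c:ℝ)-2) + 1) * q^2 ≤ ((n:ℝ)-1) * tB := by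
      have e : ((c:ℝ)+1)/((n:ℝ)-(c:ℝ)-2) + 1 = ((n:ℝ)-1)/((n:ℝ)-(c:ℝ)-2) := by
        field_simp
        ring
      rw [e, div_mul_eq_mul_div, div_le_iff₀ hmpos]
      nlinarith [mul_le_mul_of_nonneg_left hCSB (show (0:ℝ) ≤ (n:ℝ)-1 by linarith)]
    have expand : (((n:ℝ)-1-(c:ℝ))/(c:ℝ)) * r^2 + (((n:ℝ)-3)/2) * p^2
          + (((c:ℝ)+1)/((n:ℝ)-(c:ℝ)-2)) * q^2 - 2*r*p - 2*r*q
        = (((n:ℝ)-1-(c:ℝ))/(c:ℝ) + 1) * r^2 + (((n:ℝ)-3)/2 + 1) * p^2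
          + (((c:ℝ)+1)/((n:ℝ)-(c:ℝ)-2) + 1) * q^2 - (r+p+q)^2 + 2*(p*q) := by ring
    rw [expand] at hposf
    have ht2e : ((n:ℝ)-1)*t2 = ((n:ℝ)-1)*tC + ((n:ℝ)-1)*tP + ((n:ℝ)-1)*tB := by
      rw [ht2sum]; ring
    linarith


set_option maxHeartbeats 2000000 in
theorem stmt3 (a b n : ℕ) (ha : 0 < a) (hab : a ≤ b)
    (hn : (3 * b * (b + 1) : ℝ) / a + 3 * b + 7 ≤ n) :
    specRad (joinGraph n ((2 * b ^ 2 + 2 * b + a - 1) / a + 2 * b - 4)) < (n : ℝ) - 2 := by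
  set d := (2 * b ^ 2 + 2 * b + a - 1) / a with hd
  set c := d + 2 * b - 4 with hc
  -- basic real facts
  have haR : (0:ℝ) < a := by exact_mod_cast ha
  have hb1 : 1 ≤ b := le_trans ha hab
  have hbR : (1:ℝ) ≤ b := by exact_mod_cast hb1
  have habR : (a:ℝ) ≤ b := by exact_mod_cast hab
  set T : ℝ := 2*(b:ℝ)*((b:ℝ)+1)/(a:ℝ) with hT
  have hTl : 2*(b:ℝ)+2 ≤ T := by
    rw [hT, le_div_iff₀ haR]
    nlinarith
  have hd2 : 2*b+2 ≤ d := by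
    rw [hd, Nat.le_div_iff_mul_le ha]
    have h' : (2*b+2)*a + 1 ≤ 2*b^2+2*b+a := by nlinarith [Nat.mul_le_mul_right b hab]
    omega
  have hdu : (d:ℝ) ≤ T + 1 := by
    have h1 : d * a ≤ 2 * b ^ 2 + 2 * b + a - 1 := Nat.div_mul_le_self _ _
    have h1R : (d:ℝ) * a ≤ 2 * (b:ℝ)^2 + 2 * b + (a:ℝ) - 1 := by
      have h2 : ((d * a : ℕ) : ℝ) ≤ ((2 * b ^ 2 + 2 * b + a - 1 : ℕ) : ℝ) := Nat.cast_le.mpr h1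
      push_cast [Nat.cast_sub (show 1 ≤ 2 * b ^ 2 + 2 * b + a by nlinarith)] at h2
      linarith
    rw [hT]
    rw [← sub_nonneg]
    have expand : 2*(b:ℝ)*((b:ℝ)+1)/(a:ℝ) + 1 - d = (2*(b:ℝ)^2 + 2*b + a - a*d)/a := by
      field_simp
    rw [expand]
    apply div_nonneg _ haR.le
    nlinarith
  have hcR : (c:ℝ) = (d:ℝ) + 2*b - 4 := by
    rw [hc]
    have : (4:ℕ) ≤ d + 2 * b := by omega
    push_cast [Nat.cast_sub this]
    ring
  have hnT : 1.5 * T + 3*(b:ℝ) + 7 ≤ n := by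
    have : (3 * (b:ℝ) * ((b:ℝ) + 1)) / a = 1.5 * T := by rw [hT]; ring
    linarith [hn, this.symm.le]
  have hc2 : 2 ≤ c := by omega
  have hc2R : (2:ℝ) ≤ c := by exact_mod_cast hc2
  have hcnR : (c:ℝ) + 10 ≤ n := by
    have : (c:ℝ) ≤ T + 2*b - 3 := by rw [hcR]; linarith
    linarith
  have hcn : c + 10 ≤ n := by exact_mod_cast Nat.cast_le.mp (by exact_mod_cast hcnR)
  have key : 2*(c:ℝ)*((c:ℝ)+1) < ((n:ℝ)-1)*((n:ℝ)-3) := by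
    have hcu : (c:ℝ) ≤ T + 2*b - 3 := by rw [hcR]; linarith
    have h1 : (0:ℝ) ≤ (n:ℝ) - (1.5*T + 3*b + 7) := by linarith
    have h2 : (0:ℝ) ≤ T + 2*b - 3 - c := by linarith
    have h3 : (0:ℝ) ≤ T - 2*b - 2 := by linarith
    have hb0 : (0:ℝ) ≤ b := by linarith
    have hc0 : (0:ℝ) ≤ c := by linarith
    nlinarith [mul_nonneg h1 h1, mul_nonneg h2 h2, mul_nonneg h1 h2,
      mul_nonneg h3 h3, mul_nonneg h1 h3, mul_nonneg h2 h3,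
      mul_nonneg h1 hb0, mul_nonneg h2 hb0, mul_nonneg h3 hb0,
      mul_nonneg h1 hc0, mul_nonneg h2 hc0, mul_nonneg hb0 hb0]
  -- spectral part
  have hnpos : 0 < n := by omega
  haveI : Nonempty (Fin n) := ⟨⟨0, hnpos⟩⟩
  obtain ⟨j, hj⟩ := exists_eq_ciSup_of_finite
    (f := fun i => (adjMatrix_isHermitian (joinGraph n c)).eigenvalues i)
  unfold specRad
  rw [← hj]
  set v : Fin n → ℝ := ⇑((adjMatrix_isHermitian (joinGraph n c)).eigenvectorBasis j) with hv
  have hmv := (adjMatrix_isHermitian (joinGraph n c)).mulVec_eigenvectorBasis j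
  have hvne : v ≠ 0 := by
    have h0 := (adjMatrix_isHermitian (joinGraph n c)).eigenvectorBasis.orthonormal.ne_zero j
    intro h
    apply h0
    ext i
    exact congrFun h i
  have hq := quad n c hc2 hcn key v hvne
  rw [hv, hmv] at hq
  have hdp : ⇑((adjMatrix_isHermitian (joinGraph n c)).eigenvectorBasis j) ⬝ᵥ
      ((adjMatrix_isHermitian (joinGraph n c)).eigenvalues j • ⇑((adjMatrix_isHermitian (joinGraph n c)).eigenvectorBasis j))
      = (adjMatrix_isHermitian (joinGraph n c)).eigenvalues j * ∑ u, v u ^ 2 := by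
    simp only [dotProduct, Pi.smul_apply, smul_eq_mul, hv]
    rw [Finset.mul_sum]
    exact Finset.sum_congr rfl fun u _ => by ring
  rw [hdp] at hq
  have ht2pos : 0 < ∑ u, v u ^ 2 := by
    obtain ⟨u, hu⟩ := Function.ne_iff.mp hvne
    have h1 : v u ^ 2 ≤ ∑ u, v u ^ 2 :=
      Finset.single_le_sum (fun i _ => sq_nonneg (v i)) (Finset.mem_univ u)
    have : 0 < v u ^ 2 := sq_pos_of_ne_zero hu
    linarith
  exact (mul_lt_mul_iff_of_pos_right ht2pos).mp hq


end Aux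
end

section
/- If a graph G on n vertices has spectral radius ρ(G) > n − 2, then the complement of G has at most n − 2 edges. -/
open scoped Classical

/-- Gershgorin-type bound: there is an eigenvalue `μ > n - 2` whose square is bounded by
a row sum of the square of the adjacency matrix, i.e. a sum of degrees of neighbors. -/
lemma stmt8_gersh {n : ℕ} (hn : 2 ≤ n) (G : SimpleGraph (Fin n))
    (h : (n : ℝ) - 2 < specRad G) :
    ∃ μ : ℝ, (n : ℝ) - 2 < μ ∧ ∃ k, μ^2 ≤ ((∑ c ∈ G.neighborFinset k, G.degree c : ℕ) : ℝ) := by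
  have hne : Nonempty (Fin n) := ⟨⟨0, by omega⟩⟩
  set hH := adjMatrix_isHermitian G
  obtain ⟨x, hx⟩ := Finite.exists_max hH.eigenvalues
  set μ := hH.eigenvalues x with hμdef
  have hμ : (n : ℝ) - 2 < μ := lt_of_lt_of_le h (ciSup_le hx)
  refine ⟨μ, hμ, ?_⟩
  set A := G.adjMatrix ℝ with hAdef
  have hv0 : (⇑(hH.eigenvectorBasis x) : Fin n → ℝ) ≠ 0 := by
    have := hH.eigenvectorBasis.orthonormal.ne_zero x
    intro hc
    apply this
    ext j
    exact congrFun hc j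
  have hvec : Matrix.mulVec (A * A) ⇑(hH.eigenvectorBasis x) = (μ^2) • ⇑(hH.eigenvectorBasis x) := by
    rw [← Matrix.mulVec_mulVec, hH.mulVec_eigenvectorBasis, Matrix.mulVec_smul,
      hH.mulVec_eigenvectorBasis, smul_smul, ← sq]
  have hev : Module.End.HasEigenvalue (Matrix.toLin' (A * A)) (μ^2) := by
    apply Module.End.hasEigenvalue_of_hasEigenvector (x := ⇑(hH.eigenvectorBasis x))
    refine ⟨Module.End.mem_eigenspace_iff.mpr ?_, hv0⟩
    rw [Matrix.toLin'_apply, hvec]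
  obtain ⟨k, hk⟩ := eigenvalue_mem_ball hev
  refine ⟨k, ?_⟩
  rw [Metric.mem_closedBall, Real.dist_eq] at hk
  have habs : μ^2 - (A*A) k k ≤ ∑ j ∈ Finset.univ.erase k, ‖(A*A) k j‖ :=
    le_trans (le_abs_self _) hk
  have hnn : ∀ i j : Fin n, 0 ≤ (A*A) i j := by
    intro i j
    rw [Matrix.mul_apply]
    have hA0 : ∀ i j : Fin n, 0 ≤ A i j := fun i j => by
      rw [hAdef, SimpleGraph.adjMatrix_apply]; split <;> norm_num
    exact Finset.sum_nonneg fun c _ => mul_nonneg (hA0 i c) (hA0 c j)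
  have hsum : μ^2 ≤ ∑ j, (A*A) k j := by
    have : ∑ j ∈ Finset.univ.erase k, ‖(A*A) k j‖ = ∑ j ∈ Finset.univ.erase k, (A*A) k j := by
      apply Finset.sum_congr rfl
      intro j _
      exact Real.norm_of_nonneg (hnn k j)
    rw [this] at habs
    have := Finset.add_sum_erase Finset.univ (fun j => (A*A) k j) (Finset.mem_univ k)
    linarith
  have hdeg : ∀ u : Fin n, ∑ j, A u j = (G.degree u : ℝ) := by
    intro u
    simp [hAdef, SimpleGraph.adjMatrix_apply, SimpleGraph.degree,
      SimpleGraph.neighborFinset_eq_filter, Finset.sum_boole]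
  have hrow : ∑ j, (A*A) k j = ((∑ c ∈ G.neighborFinset k, G.degree c : ℕ) : ℝ) := by
    push_cast
    calc ∑ j, (A*A) k j = ∑ j, ∑ u ∈ G.neighborFinset k, A u j := by
          simp_rw [hAdef, SimpleGraph.adjMatrix_mul_apply]
      _ = ∑ u ∈ G.neighborFinset k, ∑ j, A u j := Finset.sum_comm
      _ = ∑ u ∈ G.neighborFinset k, (G.degree u : ℝ) :=
          Finset.sum_congr rfl fun u _ => hdeg u
  rw [hrow] at hsum
  exact hsum

/-- A graph on `n ≥ 2` vertices with spectral radius greater than `n - 2` has at most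
`n - 2` edges missing, i.e. its complement has at most `n - 2` edges. -/
theorem stmt8 {n : ℕ} (hn : 2 ≤ n) (G : SimpleGraph (Fin n))
    (h : (n : ℝ) - 2 < specRad G) : Gᶜ.edgeSet.ncard ≤ n - 2 := by
  obtain ⟨μ, hμ, k, hk⟩ := stmt8_gersh hn G h
  have hn2 : (0:ℝ) ≤ (n:ℝ) - 2 := by
    have : (2:ℝ) ≤ n := by exact_mod_cast hn
    linarith
  set a : ℕ := ∑ c ∈ G.neighborFinset k, G.degree c with ha
  -- (n-2)^2 < a in ℕ
  have hcast : ((n - 2 : ℕ) : ℝ) = (n:ℝ) - 2 := by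
    push_cast [Nat.cast_sub hn]
    ring
  have hlt : (n - 2)^2 < a := by
    have h1 : ((n-2:ℕ):ℝ)^2 < μ^2 := by
      rw [hcast]
      exact pow_lt_pow_left₀ hμ hn2 (by norm_num)
    have : ((n-2:ℕ):ℝ)^2 < (a:ℝ) := lt_of_lt_of_le h1 hk
    exact_mod_cast this
  by_cases hmin : ∀ v : Fin n, 1 ≤ G.degree v
  · -- no isolated vertices: a + n ≤ 2e + 1
    set e := G.edgeFinset.card with he
    have h2e : ∑ v, G.degree v = 2 * e := G.sum_degrees_eq_twice_card_edges
    set s : Finset (Fin n) := insert k (G.neighborFinset k) with hs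
    have hks : k ∉ G.neighborFinset k := by simp
    have hsplit : ∑ v ∈ Finset.univ \ s, G.degree v + ∑ v ∈ s, G.degree v = ∑ v, G.degree v :=
      Finset.sum_sdiff (Finset.subset_univ s)
    have hssum : ∑ v ∈ s, G.degree v = G.degree k + a := by
      rw [hs, Finset.sum_insert hks, ha]
    have hscard : s.card = G.degree k + 1 := by
      rw [hs, Finset.card_insert_of_notMem hks, SimpleGraph.card_neighborFinset_eq_degree]
    have hcard : (Finset.univ \ s).card = n - (G.degree k + 1) := by
      rw [Finset.card_sdiff_of_subset (Finset.subset_univ s), hscard, Finset.card_univ, Fintype.card_fin]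
    have hsle : s.card ≤ n := by
      have := Finset.card_le_card (Finset.subset_univ s)
      simpa using this
    have hlb : (Finset.univ \ s).card ≤ ∑ v ∈ Finset.univ \ s, G.degree v := by
      calc (Finset.univ \ s).card = ∑ _v ∈ Finset.univ \ s, 1 := by
            rw [Finset.sum_const, smul_eq_mul, mul_one]
        _ ≤ ∑ v ∈ Finset.univ \ s, G.degree v :=
            Finset.sum_le_sum fun v _ => hmin v
    have hkey : a + n ≤ 2 * e + 1 := by
      rw [hscard] at hsle
      rw [hssum, h2e] at hsplit
      rw [hcard] at hlb
      omega
    -- counting edges of the complement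
    have hncard : Gᶜ.edgeSet.ncard = Gᶜ.edgeFinset.card := by
      rw [← SimpleGraph.coe_edgeFinset, Set.ncard_coe_finset]
    have hdisj : Disjoint G.edgeFinset Gᶜ.edgeFinset := by
      rw [← Finset.disjoint_coe, SimpleGraph.coe_edgeFinset, SimpleGraph.coe_edgeFinset,
        SimpleGraph.disjoint_edgeSet]
      exact disjoint_compl_right
    have hunion : G.edgeFinset ∪ Gᶜ.edgeFinset = (⊤ : SimpleGraph (Fin n)).edgeFinset := by
      ext x
      induction x using Sym2.ind with
      | _ u w =>
        simp only [Finset.mem_union, SimpleGraph.mem_edgeFinset, SimpleGraph.mem_edgeSet,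
          SimpleGraph.compl_adj, SimpleGraph.top_adj]
        constructor
        · rintro (hadj | hadj)
          · exact hadj.ne
          · exact hadj.1
        · intro hne
          by_cases hadj : G.Adj u w
          · exact Or.inl hadj
          · exact Or.inr ⟨hne, hadj⟩
    have hcompl : e + Gᶜ.edgeFinset.card = n.choose 2 := by
      rw [he, ← Finset.card_union_of_disjoint hdisj, hunion,
        SimpleGraph.card_edgeFinset_top_eq_card_choose_two, Fintype.card_fin]
    have hdegtop : ∀ v : Fin n, (⊤ : SimpleGraph (Fin n)).degree v = n - 1 := by
      intro v
      have hnb : (⊤ : SimpleGraph (Fin n)).neighborFinset v = Finset.univ.erase v := by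
        ext u
        simp [SimpleGraph.mem_neighborFinset, ne_comm, eq_comm]
      rw [← SimpleGraph.card_neighborFinset_eq_degree, hnb,
        Finset.card_erase_of_mem (Finset.mem_univ v), Finset.card_univ, Fintype.card_fin]
    have htop : 2 * (⊤ : SimpleGraph (Fin n)).edgeFinset.card = n * (n - 1) := by
      rw [← SimpleGraph.sum_degrees_eq_twice_card_edges]
      rw [Finset.sum_congr rfl fun v _ => hdegtop v, Finset.sum_const, Finset.card_univ,
        Fintype.card_fin, smul_eq_mul]
    obtain ⟨m, rfl⟩ : ∃ m : ℕ, n = m + 2 := ⟨n - 2, by omega⟩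
    obtain ⟨M, hM⟩ : ∃ M : ℕ, M = m * m := ⟨_, rfl⟩
    have h2ec : 2 * e + 2 * Gᶜ.edgeFinset.card = M + 3 * m + 2 := by
      have hch : (⊤ : SimpleGraph (Fin (m + 2))).edgeFinset.card = (m + 2).choose 2 := by
        rw [SimpleGraph.card_edgeFinset_top_eq_card_choose_two, Fintype.card_fin]
      have h1 : 2 * (e + Gᶜ.edgeFinset.card) = 2 * (⊤ : SimpleGraph (Fin (m + 2))).edgeFinset.card := by
        rw [hcompl, hch]
      rw [htop] at h1
      have h2 : (m + 2) * (m + 2 - 1) = m * m + 3 * m + 2 := by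
        have : m + 2 - 1 = m + 1 := by omega
        rw [this]; ring
      rw [h2, ← hM] at h1
      omega
    have hlt' : M + 1 ≤ a := by
      have hm2 : m + 2 - 2 = m := by omega
      rw [hm2, pow_two, ← hM] at hlt
      omega
    clear hM
    rw [hncard]
    omega
  · -- an isolated vertex exists: contradiction with hlt
    push_neg at hmin
    obtain ⟨v, hv⟩ := hmin
    have hv0 : G.degree v = 0 := by omega
    have hdegle : ∀ c : Fin n, G.degree c ≤ n - 2 := by
      intro c
      by_cases hc : c = v
      · rw [hc, hv0]; omega
      · have hsub : G.neighborFinset c ⊆ (Finset.univ.erase v).erase c := by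
          intro u hu
          rw [SimpleGraph.mem_neighborFinset] at hu
          have huv : u ≠ v := by
            rintro rfl
            have hmem : c ∈ G.neighborFinset u := by
              rw [SimpleGraph.mem_neighborFinset]; exact hu.symm
            have h0 : (G.neighborFinset u).card = 0 := by
              rw [SimpleGraph.card_neighborFinset_eq_degree]; exact hv0
            rw [Finset.card_eq_zero] at h0
            simp [h0] at hmem
          have huc : u ≠ c := fun h => (G.loopless.irrefl c (h ▸ hu)).elim
          exact Finset.mem_erase.mpr ⟨huc, Finset.mem_erase.mpr ⟨huv, Finset.mem_univ u⟩⟩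
        have := Finset.card_le_card hsub
        rw [SimpleGraph.card_neighborFinset_eq_degree] at this
        have hcv : c ∈ Finset.univ.erase v := Finset.mem_erase.mpr ⟨hc, Finset.mem_univ c⟩
        rw [Finset.card_erase_of_mem hcv, Finset.card_erase_of_mem (Finset.mem_univ v),
          Finset.card_univ, Fintype.card_fin] at this
        omega
    have hale : a ≤ (n - 2) * (n - 2) := by
      calc a ≤ ∑ _c ∈ G.neighborFinset k, (n - 2) :=
            Finset.sum_le_sum fun c _ => hdegle c
        _ = G.degree k * (n - 2) := by
            rw [Finset.sum_const, smul_eq_mul, SimpleGraph.card_neighborFinset_eq_degree]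
        _ ≤ (n - 2) * (n - 2) := Nat.mul_le_mul_right _ (hdegle k)
    have : (n - 2)^2 = (n - 2) * (n - 2) := sq (n-2) ▸ by ring
    omega
end

section
/- For integers n and r with 2 ≤ r ≤ n − 3, the spectral radius of the graph K₁ ∇ (K_r ∪ K_{n−1−r}) is strictly less than n − 2. -/
open scoped Classical

/-- The graph `K₁ ∇ (K_r ∪ K_{n-1-r})` on `Fin n`: vertex `0` is joined to everything,
the vertices `1, …, r` form a clique, and the vertices `r+1, …, n-1` form a clique. -/
def oneJoin (n r : ℕ) : SimpleGraph (Fin n) where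
  Adj u v := u ≠ v ∧ ((u : ℕ) = 0 ∨ (v : ℕ) = 0 ∨ (((u : ℕ) ≤ r) ↔ ((v : ℕ) ≤ r)))
  symm := ⟨by
    rintro u v ⟨h1, h2⟩
    exact ⟨h1.symm, by tauto⟩⟩
  loopless := ⟨fun u h => h.1 rfl⟩

section Aux

open Finset Matrix

/-- Purely algebraic key inequality. -/
theorem oneJoin_keyIneq (r s x0 a b P0 P Q : ℝ) (hr : 2 ≤ r) (hs : 2 ≤ s)
    (h0 : x0^2 ≤ P0) (ha : a^2 ≤ r*P) (hb : b^2 ≤ s*Q)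
    (hP : 0 ≤ P) (hQ : 0 ≤ Q) (hP0 : 0 ≤ P0) (hT : 0 < P0 + P + Q) :
    (x0+a+b)^2 - 2*a*b < (r+s)*(P0+P+Q) := by
  rcases eq_or_ne x0 0 with h | h
  · subst h; nlinarith [hT, ha, hb]
  · have hx : 0 < x0^2 := by positivity
    have hrs : (0:ℝ) < r*s := by nlinarith
    by_contra hcon
    push_neg at hcon
    have hK := mul_le_mul_of_nonneg_left hcon (le_of_lt hrs)
    have hA := mul_le_mul_of_nonneg_left ha (by nlinarith : (0:ℝ) ≤ s*(r+s))
    have hB := mul_le_mul_of_nonneg_left hb (by nlinarith : (0:ℝ) ≤ r*(r+s))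
    have hC := mul_le_mul_of_nonneg_left h0 (by nlinarith : (0:ℝ) ≤ r*s*(r+s))
    have hF := mul_pos hx (by nlinarith : (0:ℝ) < r*r*s + r*s*s - r*s - r*r - s*s)
    nlinarith [sq_nonneg (s*a - r*x0), sq_nonneg (r*b - s*x0), hK, hA, hB, hC, hF]

/-- Entry formula for the adjacency matrix of `oneJoin n r`. -/
theorem oneJoin_entry (n r : ℕ) (u w : Fin n) :
    (oneJoin n r).adjMatrix ℝ u w =
      ((1 : ℝ) - if u = w then 1 else 0)
        - ((if (u:ℕ) ≠ 0 ∧ (u:ℕ) ≤ r then (1:ℝ) else 0) * (if r < (w:ℕ) then 1 else 0)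
          + (if r < (u:ℕ) then (1:ℝ) else 0) * (if (w:ℕ) ≠ 0 ∧ (w:ℕ) ≤ r then 1 else 0)) := by
  have hval : (u = w) ↔ ((u:ℕ) = (w:ℕ)) := Fin.ext_iff
  rw [SimpleGraph.adjMatrix_apply]
  simp only [SimpleGraph.adjMatrix_apply, oneJoin, ne_eq, hval]
  split_ifs <;> norm_num <;> omega

/-- Quadratic form of the adjacency matrix of `oneJoin n r`. -/
theorem oneJoin_quad_eq (n r : ℕ) (v : Fin n → ℝ) :
    v ⬝ᵥ ((oneJoin n r).adjMatrix ℝ *ᵥ v)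
      = (∑ u : Fin n, v u)^2 - (∑ u : Fin n, (v u)^2)
        - 2 * ((∑ u : Fin n, (if (u:ℕ) ≠ 0 ∧ (u:ℕ) ≤ r then (1:ℝ) else 0) * v u)
            * (∑ u : Fin n, (if r < (u:ℕ) then (1:ℝ) else 0) * v u)) := by
  set χ1 : Fin n → ℝ := fun u => if (u:ℕ) ≠ 0 ∧ (u:ℕ) ≤ r then (1:ℝ) else 0 with hχ1
  set χ2 : Fin n → ℝ := fun u => if r < (u:ℕ) then (1:ℝ) else 0 with hχ2
  set S := ∑ u : Fin n, v u with hS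
  set a := ∑ u : Fin n, χ1 u * v u with ha
  set b := ∑ u : Fin n, χ2 u * v u with hb
  have inner : ∀ u, ((oneJoin n r).adjMatrix ℝ *ᵥ v) u
      = S - v u - (χ1 u * b + χ2 u * a) := by
    intro u
    have step : ((oneJoin n r).adjMatrix ℝ *ᵥ v) u
        = ∑ w : Fin n, ((v w - if u = w then v w else 0)
            - (χ1 u * (χ2 w * v w) + χ2 u * (χ1 w * v w))) := by
      rw [Matrix.mulVec, dotProduct]
      refine Finset.sum_congr rfl fun w _ => ?_
      rw [oneJoin_entry]
      simp only [hχ1, hχ2]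
      split_ifs <;> ring
    rw [step]
    rw [Finset.sum_sub_distrib, Finset.sum_sub_distrib, Finset.sum_add_distrib,
      ← Finset.mul_sum, ← Finset.mul_sum, Finset.sum_ite_eq]
    simp [← hS, ← ha, ← hb]
  have outer : v ⬝ᵥ ((oneJoin n r).adjMatrix ℝ *ᵥ v)
      = ∑ u : Fin n, (v u * S - (v u)^2 - (χ1 u * v u * b + χ2 u * v u * a)) := by
    rw [dotProduct]
    refine Finset.sum_congr rfl fun u _ => ?_
    rw [inner u]; ring
  rw [outer, Finset.sum_sub_distrib, Finset.sum_sub_distrib, Finset.sum_add_distrib,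
    ← Finset.sum_mul, ← Finset.sum_mul, ← Finset.sum_mul]
  rw [← hS, ← ha, ← hb]
  ring

/-- Indicator Cauchy–Schwarz. -/
theorem ind_cs {n : ℕ} (p : Fin n → Prop) [DecidablePred p] (m : ℝ)
    (hm : (∑ u : Fin n, (if p u then (1:ℝ) else 0)) ≤ m) (v : Fin n → ℝ) :
    (∑ u : Fin n, (if p u then (1:ℝ) else 0) * v u)^2
      ≤ m * ∑ u : Fin n, (if p u then (1:ℝ) else 0) * (v u)^2 := by
  set χ : Fin n → ℝ := fun u => if p u then (1:ℝ) else 0 with hχ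
  have hnn : (0:ℝ) ≤ ∑ u : Fin n, χ u * (v u)^2 := by
    refine Finset.sum_nonneg fun u _ => ?_
    simp only [hχ]; split_ifs <;> positivity
  have hCS := Finset.sum_mul_sq_le_sq_mul_sq Finset.univ χ (fun u => χ u * v u)
  have e1 : (∑ u : Fin n, χ u * (χ u * v u)) = ∑ u : Fin n, χ u * v u :=
    Finset.sum_congr rfl fun u _ => by simp only [hχ]; split_ifs <;> ring
  have e2 : (∑ u : Fin n, (χ u)^2) = ∑ u : Fin n, χ u :=
    Finset.sum_congr rfl fun u _ => by simp only [hχ]; split_ifs <;> ring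
  have e3 : (∑ u : Fin n, (χ u * v u)^2) = ∑ u : Fin n, χ u * (v u)^2 :=
    Finset.sum_congr rfl fun u _ => by simp only [hχ]; split_ifs <;> ring
  rw [e1, e2, e3] at hCS
  calc (∑ u : Fin n, χ u * v u)^2
      ≤ (∑ u : Fin n, χ u) * ∑ u : Fin n, χ u * (v u)^2 := hCS
    _ ≤ m * ∑ u : Fin n, χ u * (v u)^2 := mul_le_mul_of_nonneg_right hm hnn

/-- Counting bound for indicators of an interval of values. -/
theorem ind_count {n : ℕ} (p : Fin n → Prop) [DecidablePred p] (lo hi : ℕ)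
    (h : ∀ u : Fin n, p u → lo ≤ (u:ℕ) ∧ (u:ℕ) ≤ hi) :
    (∑ u : Fin n, (if p u then (1:ℝ) else 0)) ≤ (hi + 1 - lo : ℕ) := by
  rw [Finset.sum_boole]
  have hcard : (Finset.univ.filter p).card ≤ (Finset.Icc lo hi).card := by
    refine Finset.card_le_card_of_injOn Fin.val (fun u hu => ?_) ?_
    · rw [Finset.mem_coe, Finset.mem_filter] at hu
      rw [Finset.mem_coe, Finset.mem_Icc]
      exact h u hu.2
    · exact fun x _ y _ hxy => Fin.ext hxy
  rw [Nat.card_Icc] at hcard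
  exact_mod_cast hcard

/-- The main quadratic form inequality. -/
theorem oneJoin_quad_lt (n r : ℕ) (hr : 2 ≤ r) (hrn : r + 3 ≤ n) (v : Fin n → ℝ)
    (hv : v ≠ 0) :
    v ⬝ᵥ ((oneJoin n r).adjMatrix ℝ *ᵥ v) < ((n:ℝ) - 2) * (v ⬝ᵥ v) := by
  set χ0 : Fin n → ℝ := fun u => if (u:ℕ) = 0 then (1:ℝ) else 0 with hχ0
  set χ1 : Fin n → ℝ := fun u => if (u:ℕ) ≠ 0 ∧ (u:ℕ) ≤ r then (1:ℝ) else 0 with hχ1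
  set χ2 : Fin n → ℝ := fun u => if r < (u:ℕ) then (1:ℝ) else 0 with hχ2
  set x0 := ∑ u : Fin n, χ0 u * v u with hx0
  set a := ∑ u : Fin n, χ1 u * v u with ha
  set b := ∑ u : Fin n, χ2 u * v u with hb
  set P0 := ∑ u : Fin n, χ0 u * (v u)^2 with hP0
  set P := ∑ u : Fin n, χ1 u * (v u)^2 with hP
  set Q := ∑ u : Fin n, χ2 u * (v u)^2 with hQ
  -- pointwise partition of unity
  have hpart : ∀ u : Fin n, χ0 u + χ1 u + χ2 u = 1 := by
    intro u
    simp only [hχ0, hχ1, hχ2]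
    split_ifs <;> first | (exfalso; omega) | norm_num
  have hsumv : (∑ u : Fin n, v u) = x0 + a + b := by
    rw [hx0, ha, hb, ← Finset.sum_add_distrib, ← Finset.sum_add_distrib]
    refine Finset.sum_congr rfl fun u _ => ?_
    have h := hpart u; linear_combination (-(v u)) * h
  have hsumsq : (∑ u : Fin n, (v u)^2) = P0 + P + Q := by
    rw [hP0, hP, hQ, ← Finset.sum_add_distrib, ← Finset.sum_add_distrib]
    refine Finset.sum_congr rfl fun u _ => ?_
    have h := hpart u; linear_combination (-((v u)^2)) * h
  -- Cauchy–Schwarz bounds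
  have hcs0 : x0^2 ≤ P0 := by
    have hcnt : (∑ u : Fin n, (if (u:ℕ) = 0 then (1:ℝ) else 0)) ≤ ((0 + 1 - 0 : ℕ) : ℝ) :=
      ind_count (fun u : Fin n => (u:ℕ) = 0) 0 0 (fun u hu => by omega)
    have := ind_cs (fun u : Fin n => (u:ℕ) = 0) 1 (by simpa using hcnt) v
    simpa [hχ0, hx0, hP0] using this
  have hcs1 : a^2 ≤ (r:ℝ) * P := by
    have hcnt : (∑ u : Fin n, (if (u:ℕ) ≠ 0 ∧ (u:ℕ) ≤ r then (1:ℝ) else 0)) ≤ ((r + 1 - 1 : ℕ) : ℝ) :=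
      ind_count (fun u : Fin n => (u:ℕ) ≠ 0 ∧ (u:ℕ) ≤ r) 1 r (fun u hu => by omega)
    have := ind_cs (fun u : Fin n => (u:ℕ) ≠ 0 ∧ (u:ℕ) ≤ r) r (by simpa using hcnt) v
    simpa [hχ1, ha, hP] using this
  have hcs2 : b^2 ≤ ((n:ℝ) - 1 - r) * Q := by
    have hcnt : (∑ u : Fin n, (if r < (u:ℕ) then (1:ℝ) else 0)) ≤ (((n-1) + 1 - (r+1) : ℕ) : ℝ) :=
      ind_count (fun u : Fin n => r < (u:ℕ)) (r+1) (n-1) (fun u hu => by have := u.isLt; omega)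
    have hcast : (((n-1) + 1 - (r+1) : ℕ) : ℝ) = (n:ℝ) - 1 - r := by
      have h1 : (n-1) + 1 - (r+1) = n - (r+1) := by omega
      rw [h1, Nat.cast_sub (by omega : r + 1 ≤ n)]
      push_cast; ring
    rw [hcast] at hcnt
    have := ind_cs (fun u : Fin n => r < (u:ℕ)) ((n:ℝ) - 1 - r) hcnt v
    simpa [hχ2, hb, hQ] using this
  -- nonnegativity
  have hPnn : (0:ℝ) ≤ P := Finset.sum_nonneg fun u _ => by
    simp only [hχ1]; split_ifs <;> positivity
  have hQnn : (0:ℝ) ≤ Q := Finset.sum_nonneg fun u _ => by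
    simp only [hχ2]; split_ifs <;> positivity
  have hP0nn : (0:ℝ) ≤ P0 := Finset.sum_nonneg fun u _ => by
    simp only [hχ0]; split_ifs <;> positivity
  -- positivity of the total
  have hvv : v ⬝ᵥ v = ∑ u : Fin n, (v u)^2 := by
    rw [dotProduct]
    exact Finset.sum_congr rfl fun u _ => by ring
  have hTpos : 0 < P0 + P + Q := by
    rw [← hsumsq]
    obtain ⟨u, hu⟩ := Function.ne_iff.mp hv
    exact Finset.sum_pos' (fun w _ => sq_nonneg _)
      ⟨u, Finset.mem_univ u, pow_two_pos_of_ne_zero hu⟩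
  -- assemble
  have hr' : (2:ℝ) ≤ r := by exact_mod_cast hr
  have hs' : (2:ℝ) ≤ (n:ℝ) - 1 - r := by
    have : ((r:ℝ) + 3) ≤ n := by exact_mod_cast hrn
    linarith
  have key := oneJoin_keyIneq (r:ℝ) ((n:ℝ) - 1 - r) x0 a b P0 P Q hr' hs'
    hcs0 hcs1 hcs2 hPnn hQnn hP0nn hTpos
  rw [oneJoin_quad_eq, hsumv, hsumsq, hvv, hsumsq]
  have : (r:ℝ) + ((n:ℝ) - 1 - r) = (n:ℝ) - 1 := by ring
  nlinarith [key]

end Aux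

open Finset Matrix in
/-- For `2 ≤ r ≤ n - 3`, the spectral radius of `K₁ ∇ (K_r ∪ K_{n-1-r})` is strictly
less than `n - 2`. -/
theorem stmt9 (n r : ℕ) (hr : 2 ≤ r) (hrn : r + 3 ≤ n) :
    specRad (oneJoin n r) < (n : ℝ) - 2 := by
  have hn : 0 < n := by omega
  haveI : Nonempty (Fin n) := ⟨⟨0, hn⟩⟩
  have hA := adjMatrix_isHermitian (oneJoin n r)
  have key : ∀ i, hA.eigenvalues i < (n:ℝ) - 2 := by
    intro i
    set v : Fin n → ℝ := (WithLp.equiv 2 (Fin n → ℝ)) (hA.eigenvectorBasis i) with hvdef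
    have hv0 : v ≠ 0 := by
      have h := hA.eigenvectorBasis.orthonormal.ne_zero i
      intro hc
      apply h
      ext u
      exact congrFun hc u
    have hmul : (oneJoin n r).adjMatrix ℝ *ᵥ v = hA.eigenvalues i • v :=
      hA.mulVec_eigenvectorBasis i
    have hq := oneJoin_quad_lt n r hr hrn v hv0
    rw [hmul, dotProduct_smul] at hq
    have hpos : 0 < dotProduct v v := by
      obtain ⟨u, hu⟩ := Function.ne_iff.mp hv0
      rw [dotProduct]
      refine Finset.sum_pos' (fun w _ => mul_self_nonneg _)
        ⟨u, Finset.mem_univ u, mul_self_pos.mpr hu⟩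
    rw [smul_eq_mul] at hq
    exact (mul_lt_mul_iff_of_pos_right hpos).mp hq
  obtain ⟨i0, hi0⟩ := Finite.exists_max hA.eigenvalues
  have hle : specRad (oneJoin n r) ≤ hA.eigenvalues i0 := ciSup_le hi0
  exact lt_of_le_of_lt hle (key i0)
end

section
/- Let G be a graph on n vertices whose complement has at most n − 2 edges, let S ⊆ V(G) and x₀ ∉ S, and suppose G − (S ∪ {x₀}) has q ≥ 2 connected components each of size at least 2. Then d_{G−S}(x₀) ≥ q(n − |S| − 1) − n + 2. -/
open scoped Classical

/-- If the complement of `G` has at most `n - 2` edges, `x₀ ∉ S`, and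
`G - (S ∪ {x₀})` has `q ≥ 2` connected components each with at least two vertices,
then `d_{G-S}(x₀) ≥ q(n - |S| - 1) - n + 2`. -/
theorem stmt14 {n : ℕ} (G : SimpleGraph (Fin n))
    (hcompl : Gᶜ.edgeSet.ncard ≤ n - 2)
    (S : Finset (Fin n)) (x₀ : Fin n) (hx₀ : x₀ ∉ S)
    (hq : 2 ≤ Nat.card (G.induce ((↑S ∪ {x₀} : Set (Fin n))ᶜ)).ConnectedComponent)
    (hsize : ∀ c : (G.induce ((↑S ∪ {x₀} : Set (Fin n))ᶜ)).ConnectedComponent,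
      2 ≤ c.supp.ncard) :
    (Nat.card (G.induce ((↑S ∪ {x₀} : Set (Fin n))ᶜ)).ConnectedComponent : ℤ)
        * ((n : ℤ) - S.card - 1) - n + 2
      ≤ ((G.neighborSet x₀ \ ↑S).ncard : ℤ) := by
  classical
  set W : Set (Fin n) := (↑S ∪ {x₀} : Set (Fin n))ᶜ with hWdef
  haveI : Fintype ↥W := Fintype.ofFinite _
  set H : SimpleGraph ↥W := G.induce W with hHdef
  haveI : Fintype H.ConnectedComponent := Fintype.ofFinite _
  set q : ℕ := Nat.card H.ConnectedComponent with hqdef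
  have hqcard : q = Fintype.card H.ConnectedComponent := Nat.card_eq_fintype_card
  set comp : ↥W → H.ConnectedComponent := H.connectedComponentMk with hcompdef
  set WF : Finset (Fin n) := W.toFinset with hWFdef
  set N : Finset (Fin n) := G.neighborFinset x₀ with hNdef
  have hWmem : ∀ v : Fin n, v ∈ W ↔ v ∉ S ∧ v ≠ x₀ := by
    intro v; simp [hWdef]; tauto
  have hx0W : x₀ ∉ W := by simp [hWmem]
  -- the degree set
  have hdset : G.neighborSet x₀ \ ↑S = ↑(WF ∩ N) := by
    ext v
    simp only [Finset.coe_inter, Set.mem_inter_iff, Set.mem_diff, hWFdef,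
      Set.coe_toFinset, hNdef, Finset.mem_coe, SimpleGraph.mem_neighborFinset,
      SimpleGraph.mem_neighborSet, hWmem]
    constructor
    · rintro ⟨hadj, hS⟩
      exact ⟨⟨hS, fun h => G.irrefl (h ▸ hadj)⟩, hadj⟩
    · rintro ⟨⟨hS, _⟩, hadj⟩
      exact ⟨hadj, hS⟩
  have hd : (G.neighborSet x₀ \ ↑S).ncard = (WF ∩ N).card := by
    rw [hdset, Set.ncard_coe_finset]
  -- edge sets A and B
  set A : Finset (Sym2 (Fin n)) := (WF \ N).image (fun y => s(x₀, y)) with hAdef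
  set F : Finset (↥W × ↥W) :=
    Finset.univ.filter (fun p => comp p.1 ≠ comp p.2) with hFdef
  set B : Finset (Sym2 (Fin n)) :=
    F.image (fun p => s((p.1 : Fin n), (p.2 : Fin n))) with hBdef
  have hAcard : A.card = (WF \ N).card :=
    Finset.card_image_of_injective _ (fun y y' h => Sym2.congr_right.mp h)
  have hpart : (WF \ N).card + (WF ∩ N).card = WF.card :=
    Finset.card_sdiff_add_card_inter WF N
  -- A ⊆ complement edges
  have hAsub : A ⊆ Gᶜ.edgeFinset := by
    intro e he
    rw [hAdef, Finset.mem_image] at he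
    obtain ⟨y, hy, rfl⟩ := he
    rw [Finset.mem_sdiff, hWFdef, Set.mem_toFinset, hWmem] at hy
    rw [SimpleGraph.mem_edgeFinset, SimpleGraph.mem_edgeSet]
    refine ⟨fun h => hy.1.2 h.symm, ?_⟩
    intro hadj
    exact hy.2 (by rw [hNdef, SimpleGraph.mem_neighborFinset]; exact hadj)
  -- B ⊆ complement edges
  have hBsub : B ⊆ Gᶜ.edgeFinset := by
    intro e he
    rw [hBdef, Finset.mem_image] at he
    obtain ⟨p, hp, rfl⟩ := he
    rw [hFdef, Finset.mem_filter] at hp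
    rw [SimpleGraph.mem_edgeFinset, SimpleGraph.mem_edgeSet]
    rw [SimpleGraph.compl_adj]
    refine ⟨fun h => hp.2 (by rw [Subtype.coe_injective h]), fun hadj => ?_⟩
    have hHadj : H.Adj p.1 p.2 := by
      rw [hHdef]; exact hadj
    exact hp.2 (SimpleGraph.ConnectedComponent.connectedComponentMk_eq_of_adj hHadj)
  -- A and B are disjoint
  have hAB : Disjoint A B := by
    rw [Finset.disjoint_left]
    intro e heA heB
    rw [hAdef, Finset.mem_image] at heA
    rw [hBdef, Finset.mem_image] at heB
    obtain ⟨y, hy, hey⟩ := heA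
    obtain ⟨p, hp, hep⟩ := heB
    have heq : s(x₀, y) = s((p.1 : Fin n), (p.2 : Fin n)) := hey.trans hep.symm
    rcases Sym2.eq_iff.mp heq with ⟨h1, _⟩ | ⟨h1, _⟩
    · exact hx0W (by rw [h1]; exact p.1.2)
    · exact hx0W (by rw [h1]; exact p.2.2)
  -- component fibers
  set suppF : H.ConnectedComponent → Finset ↥W :=
    fun c => Finset.univ.filter (fun v => comp v = c) with hsuppFdef
  have hsuppF : ∀ c, 2 ≤ (suppF c).card := by
    intro c
    have h1 := hsize c
    have h2 : c.supp.toFinset = suppF c := by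
      ext v
      simp [SimpleGraph.ConnectedComponent.mem_supp_iff, hsuppFdef, hcompdef]
    rwa [Set.ncard_eq_toFinset_card', h2] at h1
  have hcnt : ∀ u : ↥W, 2 * (q - 1) ≤ (Finset.univ.filter fun v => comp u ≠ comp v).card := by
    intro u
    have hdisj : ∀ c₁ ∈ Finset.univ.erase (comp u), ∀ c₂ ∈ Finset.univ.erase (comp u),
        c₁ ≠ c₂ → Disjoint (suppF c₁) (suppF c₂) := by
      intro c₁ _ c₂ _ hne
      rw [Finset.disjoint_left]
      intro v h1 h2
      simp only [hsuppFdef, Finset.mem_filter] at h1 h2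
      exact hne (h1.2 ▸ h2.2 ▸ rfl)
    have heq : (Finset.univ.filter fun v => comp u ≠ comp v)
        = (Finset.univ.erase (comp u)).biUnion suppF := by
      ext v
      constructor
      · intro hv
        have h := (Finset.mem_filter.mp hv).2
        refine Finset.mem_biUnion.mpr ⟨comp v,
          Finset.mem_erase.mpr ⟨fun hc => h hc.symm, Finset.mem_univ _⟩, ?_⟩
        simp [hsuppFdef]
      · intro hv
        obtain ⟨c, hc, hvc⟩ := Finset.mem_biUnion.mp hv
        have hcc : comp v = c := by
          simpa [hsuppFdef] using hvc
        refine Finset.mem_filter.mpr ⟨Finset.mem_univ _, ?_⟩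
        intro hcontra
        exact (Finset.mem_erase.mp hc).1 (by rw [← hcc, ← hcontra])
    have hcard_erase : (Finset.univ.erase (comp u)).card = q - 1 := by
      rw [Finset.card_erase_of_mem (Finset.mem_univ _), Finset.card_univ, hqcard]
    rw [heq, Finset.card_biUnion hdisj]
    calc 2 * (q - 1) = (Finset.univ.erase (comp u)).card * 2 := by
          rw [hcard_erase, mul_comm]
      _ ≤ ∑ c ∈ Finset.univ.erase (comp u), (suppF c).card := by
          simpa [smul_eq_mul] using
            Finset.card_nsmul_le_sum (Finset.univ.erase (comp u)) _ 2 (fun c _ => hsuppF c)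
  -- F counted fiberwise over first coordinates
  have hFsum : F.card = ∑ u : ↥W, (F.filter fun p => p.1 = u).card :=
    Finset.card_eq_sum_card_fiberwise (fun p _ => Finset.mem_univ p.1)
  have hfibcard : ∀ u : ↥W,
      (F.filter fun p => p.1 = u).card = (Finset.univ.filter fun v => comp u ≠ comp v).card := by
    intro u
    apply Finset.card_bij (fun p _ => p.2)
    · intro p hp
      simp only [hFdef, Finset.mem_filter, Finset.mem_univ, true_and] at hp ⊢
      rw [← hp.2]; exact hp.1
    · intro p hp p' hp' h
      simp only [hFdef, Finset.mem_filter, Finset.mem_univ, true_and] at hp hp'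
      exact Prod.ext (hp.2.trans hp'.2.symm) h
    · intro v hv
      simp only [Finset.mem_filter, Finset.mem_univ, true_and] at hv
      exact ⟨(u, v), by simp [hFdef, hv], rfl⟩
  have hFlower : (2 * (q - 1)) * WF.card ≤ F.card := by
    rw [hFsum]
    calc (2 * (q - 1)) * WF.card = ∑ _u : ↥W, (2 * (q - 1)) := by
          rw [Finset.sum_const, Finset.card_univ, smul_eq_mul, mul_comm]
          congr 1
          rw [hWFdef, Set.toFinset_card]
      _ ≤ ∑ u : ↥W, (F.filter fun p => p.1 = u).card :=
          Finset.sum_le_sum (fun u _ => (hfibcard u) ▸ hcnt u)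
  -- F maps at most 2-to-1 onto B
  have hFupper : F.card ≤ 2 * B.card := by
    apply Finset.card_le_mul_card_image
    intro e he
    rw [Finset.mem_image] at he
    obtain ⟨r, hr, rfl⟩ := he
    have hsub : (F.filter fun p => s((p.1 : Fin n), (p.2 : Fin n))
          = s((r.1 : Fin n), (r.2 : Fin n)))
        ⊆ ({r, (r.2, r.1)} : Finset (↥W × ↥W)) := by
      intro p hp
      rw [Finset.mem_filter] at hp
      rcases Sym2.eq_iff.mp hp.2 with ⟨h1, h2⟩ | ⟨h1, h2⟩
      · have hpr : p = r := Prod.ext (Subtype.coe_injective h1) (Subtype.coe_injective h2)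
        rw [hpr]; exact Finset.mem_insert_self _ _
      · have hpr : p = (r.2, r.1) :=
          Prod.ext (Subtype.coe_injective h1) (Subtype.coe_injective h2)
        rw [hpr]; simp
    calc (F.filter fun p => s((p.1 : Fin n), (p.2 : Fin n))
            = s((r.1 : Fin n), (r.2 : Fin n))).card
        ≤ ({r, (r.2, r.1)} : Finset (↥W × ↥W)).card := Finset.card_le_card hsub
      _ ≤ 2 := (Finset.card_insert_le _ _).trans (by simp)
  -- assemble
  have hunion : A.card + B.card ≤ Gᶜ.edgeFinset.card := by
    rw [← Finset.card_union_of_disjoint hAB]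
    exact Finset.card_le_card (Finset.union_subset hAsub hBsub)
  have hcompl' : Gᶜ.edgeFinset.card ≤ n - 2 := by
    rwa [← SimpleGraph.coe_edgeFinset, Set.ncard_coe_finset] at hcompl
  have hWFn : WF.card + (S.card + 1) = n := by
    have h1 : WF = (insert x₀ S)ᶜ := by
      rw [hWFdef]; ext v
      simp only [Set.mem_toFinset, hWmem, Finset.mem_compl, Finset.mem_insert]
      tauto
    have h2 : (insert x₀ S).card = S.card + 1 := Finset.card_insert_of_notMem hx₀
    have h3 : (insert x₀ S).card ≤ n := le_trans (Finset.card_le_univ _) (by simp)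
    have h4 : WF.card = n - (S.card + 1) := by
      rw [h1, Finset.card_compl, Fintype.card_fin, h2]
    omega
  rw [hd]
  have hm : (n : ℤ) - S.card - 1 = (WF.card : ℤ) := by omega
  rw [hm]
  have h1q : 1 ≤ q := by omega
  obtain ⟨K, hK⟩ : ∃ K : ℕ, K = (q - 1) * WF.card := ⟨_, rfl⟩
  have hsplit : (q : ℤ) * (WF.card : ℤ) = (K : ℤ) + WF.card := by
    rw [hK, Nat.cast_mul, Nat.cast_sub h1q]; push_cast; ring
  have hFK : 2 * K ≤ F.card := by rw [hK, ← mul_assoc]; exact hFlower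
  have hW2 : 2 ≤ WF.card := by
    obtain ⟨c⟩ : Nonempty H.ConnectedComponent :=
      Fintype.card_pos_iff.mp (by omega)
    have h1 := hsuppF c
    have h2 : (suppF c).card ≤ Fintype.card ↥W := Finset.card_le_univ _
    rw [hWFdef, Set.toFinset_card]
    omega
  rw [hsplit]
  clear hK hsplit hFlower hFsum hfibcard hcnt hsuppF hq hqcard
  omega
end
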